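/- arXiv:1908.00516 — 9 statements merged into one kernel-verified Lean document; each statement's English description precedes it below -/
import Mathlib

section
/- Every zerosumfree division semiring D that is not isomorphic to the Boolean semiring B = {0,1} is ideal-simple but not congruence-simple: the relation ρ identifying all nonzero elements (ρ = {(a,b) : a,b ∈ D∖{0}} ∪ {(0,0)}) is a congruence relation on D distinct from the diagonal and from D×D. -/
/-- The Boolean semiring `𝔹 = {0,1}` with `1 + 1 = 1` (i.e. `∨`/`∧` on `Bool`). -/
def BoolSemiring : Type := Bool

instance : Zero BoolSemiring := ⟨false⟩
instance : One BoolSemiring := ⟨true⟩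
instance : Add BoolSemiring := ⟨fun a b => (a || b : Bool)⟩
instance : Mul BoolSemiring := ⟨fun a b => (a && b : Bool)⟩
instance : DecidableEq BoolSemiring := inferInstanceAs (DecidableEq Bool)
instance : Fintype BoolSemiring := inferInstanceAs (Fintype Bool)

instance : CommSemiring BoolSemiring where
  add_assoc := by decide
  zero_add := by decide
  add_zero := by decide
  add_comm := by decide
  mul_assoc := by decide
  one_mul := by decide
  mul_one := by decide
  mul_comm := by decide
  zero_mul := by decide
  mul_zero := by decide
  left_distrib := by decide
  right_distrib := by decide
  nsmul := nsmulRec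

/-- Every zerosumfree division semiring `D` not isomorphic to the Boolean semiring
is ideal-simple but not congruence-simple: the relation `ρ` identifying all nonzero
elements is a semiring congruence distinct from the diagonal and from `D × D`. -/
theorem zerosumfree_divisionSemiring_idealSimple_not_congruenceSimple
    {D : Type*} [DivisionSemiring D]
    (hzs : ∀ a b : D, a + b = 0 → a = 0 ∧ b = 0)
    (hnb : IsEmpty (D ≃+* BoolSemiring)) :
    (∀ I : Set D,
        (0 ∈ I ∧ (∀ a ∈ I, ∀ b ∈ I, a + b ∈ I) ∧
          (∀ s : D, ∀ a ∈ I, s * a ∈ I ∧ a * s ∈ I)) →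
        I = {0} ∨ I = Set.univ) ∧
    (let ρ : D → D → Prop := fun a b => (a ≠ 0 ∧ b ≠ 0) ∨ (a = 0 ∧ b = 0);
      Equivalence ρ ∧
        (∀ a b c d : D, ρ a b → ρ c d → ρ (a + c) (b + d)) ∧
        (∀ a b c d : D, ρ a b → ρ c d → ρ (a * c) (b * d)) ∧
        ρ ≠ (fun a b => a = b) ∧ ρ ≠ (fun _ _ => True)) := by

  classical
  constructor
  · -- ideal simplicity
    intro I ⟨h0, _, hmul⟩
    by_cases hI : ∃ a ∈ I, a ≠ 0
    · right
      obtain ⟨a, haI, ha⟩ := hI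
      have h1 : (1 : D) ∈ I := by
        have := (hmul a⁻¹ a haI).1
        rwa [inv_mul_cancel₀ ha] at this
      ext s
      simp only [Set.mem_univ, iff_true]
      have := (hmul s 1 h1).1
      rwa [mul_one] at this
    · left
      push_neg at hI
      ext x
      simp only [Set.mem_singleton_iff]
      exact ⟨fun hx => hI x hx, fun hx => hx ▸ h0⟩
  · intro ρ
    have hρ : ∀ a b : D, ρ a b ↔ ((a ≠ 0 ∧ b ≠ 0) ∨ (a = 0 ∧ b = 0)) := fun a b => Iff.rfl
    refine ⟨⟨?_, ?_, ?_⟩, ?_, ?_, ?_, ?_⟩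
    · intro a
      by_cases h : a = 0
      · exact Or.inr ⟨h, h⟩
      · exact Or.inl ⟨h, h⟩
    · rintro a b (⟨h1, h2⟩ | ⟨h1, h2⟩)
      · exact Or.inl ⟨h2, h1⟩
      · exact Or.inr ⟨h2, h1⟩
    · rintro a b c (⟨h1, h2⟩ | ⟨h1, h2⟩) (⟨h3, h4⟩ | ⟨h3, h4⟩)
      · exact Or.inl ⟨h1, h4⟩
      · exact absurd h3 h2
      · exact absurd h2 h3
      · exact Or.inr ⟨h1, h4⟩
    · -- addition
      rintro a b c d (⟨h1, h2⟩ | ⟨h1, h2⟩) (⟨h3, h4⟩ | ⟨h3, h4⟩)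
      · exact Or.inl ⟨fun h => h1 (hzs _ _ h).1, fun h => h2 (hzs _ _ h).1⟩
      · exact Or.inl ⟨by rw [h3, add_zero]; exact h1, by rw [h4, add_zero]; exact h2⟩
      · exact Or.inl ⟨by rw [h1, zero_add]; exact h3, by rw [h2, zero_add]; exact h4⟩
      · exact Or.inr ⟨by rw [h1, h3, add_zero], by rw [h2, h4, add_zero]⟩
    · -- multiplication
      rintro a b c d (⟨h1, h2⟩ | ⟨h1, h2⟩) (⟨h3, h4⟩ | ⟨h3, h4⟩)
      · exact Or.inl ⟨mul_ne_zero h1 h3, mul_ne_zero h2 h4⟩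
      · exact Or.inr ⟨by rw [h3, mul_zero], by rw [h4, mul_zero]⟩
      · exact Or.inr ⟨by rw [h1, zero_mul], by rw [h2, zero_mul]⟩
      · exact Or.inr ⟨by rw [h1, zero_mul], by rw [h2, zero_mul]⟩
    · -- ρ ≠ diagonal
      intro h
      -- then any two nonzero elements are equal, so D ≃+* BoolSemiring
      have key : ∀ a b : D, a ≠ 0 → b ≠ 0 → a = b := by
        intro a b ha hb
        have : ρ a b := Or.inl ⟨ha, hb⟩
        rw [h] at this
        exact this
      have hall : ∀ a : D, a = 0 ∨ a = 1 := by
        intro a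
        by_cases ha : a = 0
        · exact Or.inl ha
        · exact Or.inr (key a 1 ha one_ne_zero)
      have htf : ((if True then true else false) : Bool) = true := rfl
      have e : D ≃+* BoolSemiring :=
        { toFun := fun d => if d = 0 then (0 : BoolSemiring) else 1
          invFun := fun b => if b = (0 : BoolSemiring) then (0 : D) else 1
          left_inv := by
            intro d
            rcases hall d with h | h <;> subst h <;> simp
          right_inv := by
            intro b
            rcases (Bool.dichotomy (show Bool from b)) with h | h <;>
              rw [show b = _ from h]
            · show (if (0:D) = 0 then (0:BoolSemiring) else 1) = (false : Bool)
              simp; rfl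
            · show (if (1:D) = 0 then (0:BoolSemiring) else 1) = (true : Bool)
              rw [if_neg one_ne_zero]; rfl
          map_mul' := by
            intro x y
            by_cases hx : x = 0
            · subst hx
              simp only [zero_mul, if_pos rfl]
              show (0:BoolSemiring) = 0 * _
              rw [zero_mul]
            · by_cases hy : y = 0
              · subst hy
                simp only [mul_zero, if_pos rfl, if_neg hx]
                show (0:BoolSemiring) = _ * 0
                rw [mul_zero]
              · show (if x * y = 0 then (0:BoolSemiring) else 1) =
                    (if x = 0 then (0:BoolSemiring) else 1) * (if y = 0 then (0:BoolSemiring) else 1)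
                rw [if_neg (mul_ne_zero hx hy), if_neg hx, if_neg hy]
                rfl
          map_add' := by
            intro x y
            by_cases hx : x = 0
            · subst hx
              simp only [zero_add, if_pos rfl]
              show _ = (0:BoolSemiring) + _
              rw [zero_add]
            · by_cases hy : y = 0
              · subst hy
                simp only [add_zero, if_pos rfl, if_neg hx]
                show (1:BoolSemiring) = 1 + 0
                rw [add_zero]
              · have hxy : x + y ≠ 0 := fun h => hx (hzs _ _ h).1
                show (if x + y = 0 then (0:BoolSemiring) else 1) =
                    (if x = 0 then (0:BoolSemiring) else 1) + (if y = 0 then (0:BoolSemiring) else 1)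
                rw [if_neg hxy, if_neg hx, if_neg hy]
                rfl }
      exact hnb.false e
    · -- ρ ≠ all
      intro h
      have : ρ 0 1 := by rw [h]; trivial
      rcases this with ⟨h1, _⟩ | ⟨_, h2⟩
      · exact h1 rfl
      · exact one_ne_zero h2
end

section
/- In the matrix semiring S = M₂(ℝ₊) over the nonnegative reals, the left ideals E₁ = {[[a,0],[b,0]] : a,b ∈ ℝ₊} and N = {[[a,c],[b,d]] : a ≤ c, b ≤ d, a,b,c,d ∈ ℝ₊} satisfy E₁ ∩ N = {0}, yet the sum E₁ + N is not direct (there exists an element with two distinct representations as a sum of an element of E₁ and an element of N). -/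
open scoped NNReal

/-- A subset of a semiring is a left ideal iff it contains `0` and is closed under
addition and left multiplication by arbitrary elements. -/
def IsLeftIdealSet {R : Type*} [Semiring R] (I : Set R) : Prop :=
  0 ∈ I ∧ (∀ a ∈ I, ∀ b ∈ I, a + b ∈ I) ∧ ∀ s : R, ∀ a ∈ I, s * a ∈ I

/-- In `M₂(ℝ₊)`, the left ideals `E₁ = {[[a,0],[b,0]]}` and
`N = {[[a,c],[b,d]] : a ≤ c, b ≤ d}` intersect in `{0}`, yet their sum is not
direct: some element has two distinct representations. -/
theorem M2_NNReal_intersection_zero_sum_not_direct :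
    let E₁ : Set (Matrix (Fin 2) (Fin 2) ℝ≥0) := {A | A 0 1 = 0 ∧ A 1 1 = 0}
    let N : Set (Matrix (Fin 2) (Fin 2) ℝ≥0) := {A | A 0 0 ≤ A 0 1 ∧ A 1 0 ≤ A 1 1}
    IsLeftIdealSet E₁ ∧ IsLeftIdealSet N ∧ E₁ ∩ N = {0} ∧
      ∃ k k' l l' : Matrix (Fin 2) (Fin 2) ℝ≥0,
        k ∈ E₁ ∧ k' ∈ E₁ ∧ l ∈ N ∧ l' ∈ N ∧ k + l = k' + l' ∧ ¬(k = k' ∧ l = l') := by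
  intro E₁ N
  refine ⟨⟨⟨rfl, rfl⟩, ?_, ?_⟩, ⟨⟨le_refl 0, le_refl 0⟩, ?_, ?_⟩, ?_, ?_⟩
  · rintro a ⟨ha1, ha2⟩ b ⟨hb1, hb2⟩
    exact ⟨by simp [Matrix.add_apply, ha1, hb1], by simp [Matrix.add_apply, ha2, hb2]⟩
  · rintro s a ⟨ha1, ha2⟩
    constructor <;>
      simp [Matrix.mul_apply, Fin.sum_univ_two, ha1, ha2]
  · rintro a ⟨ha1, ha2⟩ b ⟨hb1, hb2⟩
    exact ⟨add_le_add ha1 hb1, add_le_add ha2 hb2⟩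
  · rintro s a ⟨ha1, ha2⟩
    constructor <;>
      · simp only [Matrix.mul_apply, Fin.sum_univ_two]
        exact add_le_add (mul_le_mul_right ha1 _) (mul_le_mul_right ha2 _)
  · ext A
    simp only [Set.mem_inter_iff, Set.mem_singleton_iff]
    constructor
    · rintro ⟨⟨h1, h2⟩, h3, h4⟩
      ext i j
      fin_cases i <;> fin_cases j <;>
        simp_all [le_antisymm (h3.trans h1.le) (zero_le), h1, h2,
          le_antisymm (h4.trans h2.le) (zero_le)]
    · rintro rfl
      exact ⟨⟨rfl, rfl⟩, le_refl 0, le_refl 0⟩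
  · refine ⟨!![1,0;0,0], 0, !![0,1;0,0], !![1,1;0,0], ⟨rfl, rfl⟩, ⟨rfl, rfl⟩,
      ⟨by norm_num, le_refl 0⟩, ⟨by norm_num, le_refl 0⟩, ?_, ?_⟩
    · ext i j; fin_cases i <;> fin_cases j <;> simp
    · rintro ⟨h, -⟩
      have := congrFun (congrFun h 0) 0
      simp at this
end

section
/- A left S-semimodule M satisfies the ascending chain condition on direct summands if and only if it satisfies the descending chain condition on direct summands. -/
section DirectSumDefs

variable {S : Type*} [Semiring S] {M : Type*} [AddCommMonoid M] [Module S M]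

/-- `N` is the internal direct sum of its subsemimodules `K` and `L`: every element
of `N` is uniquely a sum of an element of `K` and an element of `L`. -/
def IsDirectSumOf (N K L : Submodule S M) : Prop :=
  K ≤ N ∧ L ≤ N ∧ (∀ m ∈ N, ∃ k ∈ K, ∃ l ∈ L, m = k + l) ∧
    ∀ k k' l l' : M, k ∈ K → k' ∈ K → l ∈ L → l' ∈ L → k + l = k' + l' →
      k = k' ∧ l = l'

/-- `N` is a direct summand of `M`, i.e. `M = N ⊕ N'` for some subsemimodule `N'`. -/
def IsDirectSummand (N : Submodule S M) : Prop :=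
  ∃ N' : Submodule S M, IsDirectSumOf ⊤ N N'

end DirectSumDefs

namespace DSAux

section Aux

variable {S : Type*} [Semiring S] {M : Type*} [AddCommMonoid M] [Module S M]
variable {K L : Submodule S M}

/-- First projection of a direct sum decomposition of `⊤`. -/
noncomputable def pi1 (h : IsDirectSumOf (⊤ : Submodule S M) K L) (m : M) : M :=
  (h.2.2.1 m Submodule.mem_top).choose

/-- Second projection of a direct sum decomposition of `⊤`. -/
noncomputable def pi2 (h : IsDirectSumOf (⊤ : Submodule S M) K L) (m : M) : M :=
  (h.2.2.1 m Submodule.mem_top).choose_spec.2.choose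

lemma pi1_mem (h : IsDirectSumOf (⊤ : Submodule S M) K L) (m : M) : pi1 h m ∈ K :=
  (h.2.2.1 m Submodule.mem_top).choose_spec.1

lemma pi2_mem (h : IsDirectSumOf (⊤ : Submodule S M) K L) (m : M) : pi2 h m ∈ L :=
  (h.2.2.1 m Submodule.mem_top).choose_spec.2.choose_spec.1

lemma pi_add (h : IsDirectSumOf (⊤ : Submodule S M) K L) (m : M) :
    m = pi1 h m + pi2 h m :=
  (h.2.2.1 m Submodule.mem_top).choose_spec.2.choose_spec.2

lemma pi_eq (h : IsDirectSumOf (⊤ : Submodule S M) K L) {m k l : M}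
    (hk : k ∈ K) (hl : l ∈ L) (hm : m = k + l) :
    pi1 h m = k ∧ pi2 h m = l :=
  h.2.2.2 _ _ _ _ (pi1_mem h m) hk (pi2_mem h m) hl (by rw [← pi_add h m, hm])

lemma pi1_add (h : IsDirectSumOf (⊤ : Submodule S M) K L) (x y : M) :
    pi1 h (x + y) = pi1 h x + pi1 h y :=
  (pi_eq h (add_mem (pi1_mem h x) (pi1_mem h y)) (add_mem (pi2_mem h x) (pi2_mem h y))
    (by conv_lhs => rw [pi_add h x, pi_add h y]
        exact add_add_add_comm _ _ _ _)).1

lemma pi2_add (h : IsDirectSumOf (⊤ : Submodule S M) K L) (x y : M) :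
    pi2 h (x + y) = pi2 h x + pi2 h y :=
  (pi_eq h (add_mem (pi1_mem h x) (pi1_mem h y)) (add_mem (pi2_mem h x) (pi2_mem h y))
    (by conv_lhs => rw [pi_add h x, pi_add h y]
        exact add_add_add_comm _ _ _ _)).2

lemma pi1_smul (h : IsDirectSumOf (⊤ : Submodule S M) K L) (c : S) (x : M) :
    pi1 h (c • x) = c • pi1 h x :=
  (pi_eq h (K.smul_mem c (pi1_mem h x)) (L.smul_mem c (pi2_mem h x))
    (by conv_lhs => rw [pi_add h x]
        exact smul_add c _ _)).1

lemma pi2_smul (h : IsDirectSumOf (⊤ : Submodule S M) K L) (c : S) (x : M) :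
    pi2 h (c • x) = c • pi2 h x :=
  (pi_eq h (K.smul_mem c (pi1_mem h x)) (L.smul_mem c (pi2_mem h x))
    (by conv_lhs => rw [pi_add h x]
        exact smul_add c _ _)).2

lemma pi_of_mem_left (h : IsDirectSumOf (⊤ : Submodule S M) K L) {k : M} (hk : k ∈ K) :
    pi1 h k = k ∧ pi2 h k = 0 :=
  pi_eq h hk (zero_mem L) (add_zero k).symm

lemma pi_of_mem_right (h : IsDirectSumOf (⊤ : Submodule S M) K L) {l : M} (hl : l ∈ L) :
    pi1 h l = 0 ∧ pi2 h l = l :=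
  pi_eq h (zero_mem K) hl (zero_add l).symm

/-- Symmetry of direct sum decompositions of `⊤`. -/
lemma symm (h : IsDirectSumOf (⊤ : Submodule S M) K L) :
    IsDirectSumOf (⊤ : Submodule S M) L K := by
  refine ⟨le_top, le_top, fun m hm => ?_, fun l l' k k' hl hl' hk hk' e => ?_⟩
  · obtain ⟨k, hk, l, hl, e⟩ := h.2.2.1 m hm
    exact ⟨l, hl, k, hk, by rw [e, add_comm]⟩
  · have := h.2.2.2 k k' l l' hk hk' hl hl'
      (by rw [add_comm k l, add_comm k' l']; exact e)
    exact ⟨this.2, this.1⟩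

/-- A submodule built as the range of an additive, `S`-linear map `M → M`. -/
def rangeSubmodule (φ : M → M) (hadd : ∀ x y, φ (x + y) = φ x + φ y)
    (hsmul : ∀ (c : S) (x : M), φ (c • x) = c • φ x) : Submodule S M where
  carrier := Set.range φ
  add_mem' := by
    rintro _ _ ⟨x, rfl⟩ ⟨y, rfl⟩
    exact ⟨x + y, hadd x y⟩
  zero_mem' := ⟨0, by
    have h := hsmul (0 : S) 0
    simpa using h⟩
  smul_mem' := fun c _ hx => by
    obtain ⟨x, rfl⟩ := hx
    exact ⟨c • x, hsmul c x⟩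

section TwoDecomps

variable {A A' B C : Submodule S M}

/-- Key identity: for `w ∈ A'`, `pi1 hB w + pi1 hA (pi2 hB w) = 0`. -/
lemma key (hA : IsDirectSumOf (⊤ : Submodule S M) A A')
    (hB : IsDirectSumOf (⊤ : Submodule S M) B C) (hBA : B ≤ A) {w : M} (hw : w ∈ A') :
    pi1 hB w + pi1 hA (pi2 hB w) = 0 := by
  have h0 : pi1 hA w = 0 := (pi_of_mem_right hA hw).1
  have h1 : pi1 hA w = pi1 hA (pi1 hB w) + pi1 hA (pi2 hB w) := by
    conv_lhs => rw [pi_add hB w]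
    exact pi1_add hA _ _
  have h2 : pi1 hA (pi1 hB w) = pi1 hB w :=
    (pi_of_mem_left hA (hBA (pi1_mem hB w))).1
  rw [h2] at h1
  rw [← h1, h0]

/-- `pi2 hA ∘ pi2 hB = pi2 hA` (since the `B`-part lies in `A`). -/
lemma pi2_pi2 (hA : IsDirectSumOf (⊤ : Submodule S M) A A')
    (hB : IsDirectSumOf (⊤ : Submodule S M) B C) (hBA : B ≤ A) (z : M) : pi2 hA (pi2 hB z) = pi2 hA z := by
  have h1 : pi2 hA z = pi2 hA (pi1 hB z) + pi2 hA (pi2 hB z) := by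
    conv_lhs => rw [pi_add hB z]
    exact pi2_add hA _ _
  have h2 : pi2 hA (pi1 hB z) = 0 :=
    (pi_of_mem_left hA (hBA (pi1_mem hB z))).2
  rw [h2, zero_add] at h1
  exact h1.symm

/-- L2: there is a complement of the larger summand `A` inside any complement `C`
of the smaller summand `B`. -/
lemma exists_compl_le (hA : IsDirectSumOf (⊤ : Submodule S M) A A')
    (hB : IsDirectSumOf (⊤ : Submodule S M) B C) (hBA : B ≤ A) : ∃ E : Submodule S M, IsDirectSumOf ⊤ A E ∧ E ≤ C := by
  classical
  set t : M → M := fun m => pi2 hB (pi2 hA m) with ht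
  have tadd : ∀ x y, t (x + y) = t x + t y := fun x y => by
    simp only [ht, pi2_add hA, pi2_add hB]
  have tsmul : ∀ (c : S) (x : M), t (c • x) = c • t x := fun c x => by
    simp only [ht, pi2_smul hA, pi2_smul hB]
  refine ⟨rangeSubmodule t tadd tsmul, ⟨le_top, le_top, fun m _ => ?_, ?_⟩,
    fun e he => ?_⟩
  · refine ⟨pi1 hA m + pi1 hB (pi2 hA m),
      add_mem (pi1_mem hA m) (hBA (pi1_mem hB _)), t m, ⟨m, rfl⟩, ?_⟩
    calc m = pi1 hA m + pi2 hA m := pi_add hA m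
      _ = pi1 hA m + (pi1 hB (pi2 hA m) + pi2 hB (pi2 hA m)) := by
          conv_lhs => rw [pi_add hB (pi2 hA m)]
      _ = pi1 hA m + pi1 hB (pi2 hA m) + t m := (add_assoc _ _ _).symm
  · rintro k k' _ _ hk hk' ⟨x, rfl⟩ ⟨y, rfl⟩ heq
    have hdecx : k + t x = (k + pi1 hA (t x)) + pi2 hA x := by
      have h1 : t x = pi1 hA (t x) + pi2 hA x := by
        conv_lhs => rw [pi_add hA (t x)]
        rw [show pi2 hA (t x) = pi2 hA x from
          (pi2_pi2 hA hB hBA (pi2 hA x)).trans (pi_of_mem_right hA (pi2_mem hA x)).2]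
      conv_lhs => rw [h1]
      exact (add_assoc _ _ _).symm
    have hdecy : k' + t y = (k' + pi1 hA (t y)) + pi2 hA y := by
      have h1 : t y = pi1 hA (t y) + pi2 hA y := by
        conv_lhs => rw [pi_add hA (t y)]
        rw [show pi2 hA (t y) = pi2 hA y from
          (pi2_pi2 hA hB hBA (pi2 hA y)).trans (pi_of_mem_right hA (pi2_mem hA y)).2]
      conv_lhs => rw [h1]
      exact (add_assoc _ _ _).symm
    have huniq := hA.2.2.2 (k + pi1 hA (t x)) (k' + pi1 hA (t y)) (pi2 hA x) (pi2 hA y)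
      (add_mem hk (pi1_mem hA _)) (add_mem hk' (pi1_mem hA _))
      (pi2_mem hA x) (pi2_mem hA y) (by rw [← hdecx, ← hdecy]; exact heq)
    have hxy : pi2 hA x = pi2 hA y := huniq.2
    have htxy : t x = t y := by simp only [ht, hxy]
    refine ⟨?_, htxy⟩
    have hkey : pi1 hB (pi2 hA x) + pi1 hA (pi2 hB (pi2 hA x)) = 0 :=
      key hA hB hBA (pi2_mem hA x)
    have h1 := huniq.1
    rw [htxy] at h1
    have h2 : k + (pi1 hA (t y) + pi1 hB (pi2 hA x)) =
        k' + (pi1 hA (t y) + pi1 hB (pi2 hA x)) := by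
      rw [← add_assoc, ← add_assoc, h1]
    have h3 : pi1 hA (t y) + pi1 hB (pi2 hA x) = 0 := by
      rw [add_comm]
      have h4 : t y = pi2 hB (pi2 hA x) := by rw [← htxy]
      rw [h4]
      exact hkey
    rw [h3, add_zero, add_zero] at h2
    exact h2
  · obtain ⟨x, rfl⟩ := he
    exact pi2_mem hB _

/-- L1: there is a complement of the smaller summand `B` containing any complement `A'`
of the larger summand `A`. -/
lemma exists_compl_ge (hA : IsDirectSumOf (⊤ : Submodule S M) A A')
    (hB : IsDirectSumOf (⊤ : Submodule S M) B C) (hBA : B ≤ A) : ∃ D : Submodule S M, IsDirectSumOf ⊤ B D ∧ A' ≤ D := by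
  classical
  set d : M → M := fun m => pi2 hB m + pi1 hB (pi2 hA m) with hd
  have dadd : ∀ x y, d (x + y) = d x + d y := fun x y => by
    simp only [hd, pi2_add hB, pi2_add hA, pi1_add hB]
    exact add_add_add_comm _ _ _ _
  have dsmul : ∀ (c : S) (x : M), d (c • x) = c • d x := fun c x => by
    simp only [hd, pi2_smul hB, pi2_smul hA, pi1_smul hB, smul_add]
  refine ⟨rangeSubmodule d dadd dsmul, ⟨le_top, le_top, fun m _ => ?_, ?_⟩,
    fun w hw => ?_⟩
  · -- existence: m = pi1 hB (pi1 hA m) + d m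
    refine ⟨pi1 hB (pi1 hA m), pi1_mem hB _, d m, ⟨m, rfl⟩, ?_⟩
    have h1 : pi1 hB m = pi1 hB (pi1 hA m) + pi1 hB (pi2 hA m) := by
      conv_lhs => rw [pi_add hA m]
      exact pi1_add hB _ _
    calc m = pi1 hB m + pi2 hB m := pi_add hB m
      _ = (pi1 hB (pi1 hA m) + pi1 hB (pi2 hA m)) + pi2 hB m := by rw [← h1]
      _ = pi1 hB (pi1 hA m) + (pi2 hB m + pi1 hB (pi2 hA m)) := by
          rw [add_assoc, add_comm (pi1 hB (pi2 hA m)) (pi2 hB m)]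
  · rintro k k' _ _ hk hk' ⟨x, rfl⟩ ⟨y, rfl⟩ heq
    -- heq : k + d x = k' + d y
    -- (A, A') form: k + d x = (k + pi1 hA (pi2 hB x) + pi1 hB (pi2 hA x)) + pi2 hA x
    have hAx : k + d x =
        (k + pi1 hA (pi2 hB x) + pi1 hB (pi2 hA x)) + pi2 hA x := by
      have h1 : pi2 hB x = pi1 hA (pi2 hB x) + pi2 hA x := by
        conv_lhs => rw [pi_add hA (pi2 hB x)]
        rw [pi2_pi2 hA hB hBA x]
      calc k + d x = k + (pi2 hB x + pi1 hB (pi2 hA x)) := rfl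
        _ = k + ((pi1 hA (pi2 hB x) + pi2 hA x) + pi1 hB (pi2 hA x)) := by rw [← h1]
        _ = (k + pi1 hA (pi2 hB x) + pi1 hB (pi2 hA x)) + pi2 hA x := by
            abel
    have hAy : k' + d y =
        (k' + pi1 hA (pi2 hB y) + pi1 hB (pi2 hA y)) + pi2 hA y := by
      have h1 : pi2 hB y = pi1 hA (pi2 hB y) + pi2 hA y := by
        conv_lhs => rw [pi_add hA (pi2 hB y)]
        rw [pi2_pi2 hA hB hBA y]
      calc k' + d y = k' + (pi2 hB y + pi1 hB (pi2 hA y)) := rfl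
        _ = k' + ((pi1 hA (pi2 hB y) + pi2 hA y) + pi1 hB (pi2 hA y)) := by rw [← h1]
        _ = (k' + pi1 hA (pi2 hB y) + pi1 hB (pi2 hA y)) + pi2 hA y := by
            abel
    have huniqA := hA.2.2.2 _ _ (pi2 hA x) (pi2 hA y)
      (add_mem (add_mem (hBA hk) (pi1_mem hA _)) (hBA (pi1_mem hB _)))
      (add_mem (add_mem (hBA hk') (pi1_mem hA _)) (hBA (pi1_mem hB _)))
      (pi2_mem hA x) (pi2_mem hA y) (by rw [← hAx, ← hAy]; exact heq)
    have hII : pi2 hA x = pi2 hA y := huniqA.2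
    -- (B, C) form: k + d x = (k + pi1 hB (pi2 hA x)) + pi2 hB x
    have hBx : k + d x = (k + pi1 hB (pi2 hA x)) + pi2 hB x := by
      calc k + d x = k + (pi2 hB x + pi1 hB (pi2 hA x)) := rfl
        _ = (k + pi1 hB (pi2 hA x)) + pi2 hB x := by
            rw [add_comm (pi2 hB x) (pi1 hB (pi2 hA x)), ← add_assoc]
    have hBy : k' + d y = (k' + pi1 hB (pi2 hA y)) + pi2 hB y := by
      calc k' + d y = k' + (pi2 hB y + pi1 hB (pi2 hA y)) := rfl
        _ = (k' + pi1 hB (pi2 hA y)) + pi2 hB y := by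
            rw [add_comm (pi2 hB y) (pi1 hB (pi2 hA y)), ← add_assoc]
    have huniqB := hB.2.2.2 _ _ (pi2 hB x) (pi2 hB y)
      (add_mem hk (pi1_mem hB _)) (add_mem hk' (pi1_mem hB _))
      (pi2_mem hB x) (pi2_mem hB y) (by rw [← hBx, ← hBy]; exact heq)
    have hIV : pi2 hB x = pi2 hB y := huniqB.2
    have hIII : k + pi1 hB (pi2 hA x) = k' + pi1 hB (pi2 hA y) := huniqB.1
    rw [← hII] at hIII
    -- cancel pi1 hB (pi2 hA x) using the key identity
    have hkey : pi1 hB (pi2 hA x) + pi1 hA (pi2 hB (pi2 hA x)) = 0 :=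
      key hA hB hBA (pi2_mem hA x)
    have h5 : k + (pi1 hB (pi2 hA x) + pi1 hA (pi2 hB (pi2 hA x))) =
        k' + (pi1 hB (pi2 hA x) + pi1 hA (pi2 hB (pi2 hA x))) := by
      rw [← add_assoc, ← add_assoc, hIII]
    rw [hkey, add_zero, add_zero] at h5
    refine ⟨h5, ?_⟩
    show d x = d y
    simp only [hd, hII, hIV]
  · -- A' ≤ D
    have h1 : pi2 hA w = w := (pi_of_mem_right hA hw).2
    refine ⟨w, ?_⟩
    show pi2 hB w + pi1 hB (pi2 hA w) = w
    rw [h1, add_comm]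
    exact (pi_add hB w).symm

end TwoDecomps

/-- If two summands with a common complement are comparable, they are equal. -/
lemma eq_of_common_compl {A A₂ C : Submodule S M}
    (h1 : IsDirectSumOf (⊤ : Submodule S M) A C)
    (h2 : IsDirectSumOf (⊤ : Submodule S M) A₂ C) (hle : A ≤ A₂) : A₂ = A := by
  refine le_antisymm (fun a ha => ?_) hle
  obtain ⟨k, hk, l, hl, e⟩ := h1.2.2.1 a Submodule.mem_top
  have h := h2.2.2.2 a k 0 l ha (hle hk) (zero_mem C) hl (by rw [add_zero]; exact e)
  rw [h.1]; exact hk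

end Aux

/-- A recursive chain construction. -/
lemma exists_chain {α : Type*} (P : ℕ → α → Prop) (R : α → α → Prop)
    (h0 : ∃ a, P 0 a) (hstep : ∀ n a, P n a → ∃ b, P (n + 1) b ∧ R a b) :
    ∃ g : ℕ → α, (∀ n, P n (g n)) ∧ ∀ n, R (g n) (g (n + 1)) := by
  classical
  let G : (n : ℕ) → {a : α // P n a} := fun n =>
    Nat.rec ⟨h0.choose, h0.choose_spec⟩
      (fun k ih => ⟨(hstep k ih.1 ih.2).choose, (hstep k ih.1 ih.2).choose_spec.1⟩) n
  exact ⟨fun n => (G n).1, fun n => (G n).2,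
    fun n => (hstep n (G n).1 (G n).2).choose_spec.2⟩

end DSAux

/-- A left `S`-semimodule `M` satisfies the ACC on direct summands if and only if
it satisfies the DCC on direct summands. -/
theorem acc_iff_dcc_on_direct_summands
    {S : Type*} [Semiring S] {M : Type*} [AddCommMonoid M] [Module S M] :
    (∀ f : ℕ → Submodule S M, (∀ n, IsDirectSummand (f n)) →
        (∀ n, f n ≤ f (n + 1)) → ∃ n, ∀ m, n ≤ m → f m = f n) ↔
      (∀ f : ℕ → Submodule S M, (∀ n, IsDirectSummand (f n)) →
        (∀ n, f (n + 1) ≤ f n) → ∃ n, ∀ m, n ≤ m → f m = f n) := by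
  constructor
  · -- ACC → DCC
    intro hACC f hsum hdesc
    have hstep : ∀ n (Cn : Submodule S M), IsDirectSumOf ⊤ (f n) Cn →
        ∃ D, IsDirectSumOf ⊤ (f (n + 1)) D ∧ Cn ≤ D := by
      intro n Cn hc
      obtain ⟨C', hC'⟩ := hsum (n + 1)
      exact DSAux.exists_compl_ge hc hC' (hdesc n)
    obtain ⟨g, hg1, hg2⟩ := DSAux.exists_chain
      (fun n Cn => IsDirectSumOf ⊤ (f n) Cn) (· ≤ ·) (hsum 0) hstep
    obtain ⟨n₀, hn₀⟩ := hACC g (fun n => ⟨f n, DSAux.symm (hg1 n)⟩) hg2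
    refine ⟨n₀, fun m hm => ?_⟩
    have hfm : f m ≤ f n₀ := antitone_nat_of_succ_le hdesc hm
    have h2 : IsDirectSumOf ⊤ (f m) (g n₀) := by
      rw [← hn₀ m hm]; exact hg1 m
    exact (DSAux.eq_of_common_compl h2 (hg1 n₀) hfm).symm
  · -- DCC → ACC
    intro hDCC f hsum hasc
    have hstep : ∀ n (Cn : Submodule S M), IsDirectSumOf ⊤ (f n) Cn →
        ∃ E, IsDirectSumOf ⊤ (f (n + 1)) E ∧ E ≤ Cn := by
      intro n Cn hc
      obtain ⟨A', hA'⟩ := hsum (n + 1)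
      exact DSAux.exists_compl_le hA' hc (hasc n)
    obtain ⟨g, hg1, hg2⟩ := DSAux.exists_chain
      (fun n Cn => IsDirectSumOf ⊤ (f n) Cn) (fun a b => b ≤ a) (hsum 0) hstep
    obtain ⟨n₀, hn₀⟩ := hDCC g (fun n => ⟨f n, DSAux.symm (hg1 n)⟩) hg2
    refine ⟨n₀, fun m hm => ?_⟩
    have hfm : f n₀ ≤ f m := monotone_nat_of_le_succ hasc hm
    have h2 : IsDirectSumOf ⊤ (f m) (g n₀) := by
      rw [← hn₀ m hm]; exact hg1 m
    exact DSAux.eq_of_common_compl (hg1 n₀) h2 hfm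
end

section
/- Let M be a left S-semimodule and N a subtractive subsemimodule of M. If M = L ⊕ K for subsemimodules L ≤ N and K ≤ M, then N = L ⊕ (K ∩ N). -/
/-- A subsemimodule `N ≤ M` is subtractive iff `m + n = n'` with `n, n' ∈ N`
implies `m ∈ N`. -/
def Submodule.IsSubtractive {S : Type*} [Semiring S] {M : Type*} [AddCommMonoid M]
    [Module S M] (N : Submodule S M) : Prop :=
  ∀ m n n' : M, n ∈ N → n' ∈ N → m + n = n' → m ∈ N

/-- If `N` is a subtractive subsemimodule of `M` and `M = L ⊕ K` with `L ≤ N`,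
then `N = L ⊕ (K ∩ N)`. -/
theorem subtractive_inherits_decomposition
    {S : Type*} [Semiring S] {M : Type*} [AddCommMonoid M] [Module S M]
    (N L K : Submodule S M) (hN : N.IsSubtractive) (hLN : L ≤ N)
    (h : IsDirectSumOf ⊤ L K) : IsDirectSumOf N L (K ⊓ N) := by
  obtain ⟨-, -, hex, huniq⟩ := h
  refine ⟨hLN, inf_le_right, ?_, ?_⟩
  · intro m hm
    obtain ⟨l, hl, k, hk, rfl⟩ := hex m trivial
    refine ⟨l, hl, k, ⟨hk, hN k l (l + k) (hLN hl) hm (by rw [add_comm])⟩, rfl⟩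
  · intro k k' l l' hk hk' hl hl' heq
    exact huniq k k' l l' hk hk' hl.1 hl'.1 heq
end

section
/- If a semiring S, viewed as a left S-semimodule over itself, satisfies the ascending chain condition on direct summands, then S = S₁ ⊕ ⋯ ⊕ Sₙ is a finite direct sum of left ideals Sᵢ each of which is an irreducible summand. -/
/-- A direct summand `N` of `M` is an irreducible summand iff `{0}` is a maximal
summand of `N`, i.e. `N ≠ 0` and `N` has no non-trivial direct summands. -/
def IsIrreducibleSummand {S : Type*} [Semiring S] {M : Type*} [AddCommMonoid M]
    [Module S M] (N : Submodule S M) : Prop :=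
  IsDirectSummand N ∧ N ≠ ⊥ ∧
    ∀ L L' : Submodule S M, IsDirectSumOf N L L' → L = ⊥ ∨ L = N

section Aux

variable {S : Type*} [Semiring S]

/-- `N` is a finite internal direct sum of irreducible summands of `S`. -/
def GoodSummand (N : Submodule S S) : Prop :=
  ∃ (n : ℕ) (g : Fin n → Submodule S S),
    (∀ i, IsIrreducibleSummand (g i)) ∧ (∀ i, g i ≤ N) ∧
    (∀ x ∈ N, ∃ c : Fin n → S, (∀ i, c i ∈ g i) ∧ x = ∑ i, c i) ∧
    (∀ c c' : Fin n → S, (∀ i, c i ∈ g i) → (∀ i, c' i ∈ g i) →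
      ∑ i, c i = ∑ i, c' i → c = c')

lemma isDirectSumOf_swap {N K L : Submodule S S} (h : IsDirectSumOf N K L) :
    IsDirectSumOf N L K := by
  obtain ⟨h1, h2, h3, h4⟩ := h
  refine ⟨h2, h1, ?_, ?_⟩
  · intro m hm
    obtain ⟨k, hk, l, hl, e⟩ := h3 m hm
    exact ⟨l, hl, k, hk, by rw [e, add_comm]⟩
  · intro l l' k k' hl hl' hk hk' e
    have := h4 k k' l l' hk hk' hl hl' (by rw [add_comm k l, add_comm k' l']; exact e)
    exact ⟨this.2, this.1⟩

lemma eq_zero_of_mem_both {N K L : Submodule S S} (h : IsDirectSumOf N K L)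
    {x : S} (hK : x ∈ K) (hL : x ∈ L) : x = 0 :=
  (h.2.2.2 x 0 0 x hK K.zero_mem L.zero_mem hL (by simp)).1

lemma goodSummand_bot : GoodSummand (⊥ : Submodule S S) := by
  refine ⟨0, Fin.elim0, fun i => i.elim0, fun i => i.elim0, ?_, ?_⟩
  · intro x hx
    exact ⟨Fin.elim0, fun i => i.elim0, by simpa using hx⟩
  · intro c c' _ _ _
    exact funext fun i => i.elim0

lemma goodSummand_of_irreducible {N : Submodule S S} (h : IsIrreducibleSummand N) :
    GoodSummand N := by
  refine ⟨1, fun _ => N, fun _ => h, fun _ => le_rfl, ?_, ?_⟩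
  · intro x hx
    exact ⟨fun _ => x, fun _ => hx, by simp⟩
  · intro c c' hc hc' hsum
    rw [Fin.sum_univ_one, Fin.sum_univ_one] at hsum
    exact funext fun i => by rw [Subsingleton.elim i 0]; exact hsum

lemma goodSummand_of_directSum {N L L' : Submodule S S} (h : IsDirectSumOf N L L')
    (hL : GoodSummand L) (hL' : GoodSummand L') : GoodSummand N := by
  obtain ⟨m, g₁, hirr₁, hle₁, hspan₁, huniq₁⟩ := hL
  obtain ⟨n, g₂, hirr₂, hle₂, hspan₂, huniq₂⟩ := hL'
  refine ⟨m + n, Fin.addCases g₁ g₂, ?_, ?_, ?_, ?_⟩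
  · intro i
    refine Fin.addCases (fun j => ?_) (fun j => ?_) i
    · simp only [Fin.addCases_left]; exact hirr₁ j
    · simp only [Fin.addCases_right]; exact hirr₂ j
  · intro i
    refine Fin.addCases (fun j => ?_) (fun j => ?_) i
    · simp only [Fin.addCases_left]; exact (hle₁ j).trans h.1
    · simp only [Fin.addCases_right]; exact (hle₂ j).trans h.2.1
  · intro x hx
    obtain ⟨k, hk, l, hl, e⟩ := h.2.2.1 x hx
    obtain ⟨c₁, hc₁, e₁⟩ := hspan₁ k hk
    obtain ⟨c₂, hc₂, e₂⟩ := hspan₂ l hl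
    refine ⟨Fin.addCases c₁ c₂, ?_, ?_⟩
    · intro i
      refine Fin.addCases (fun j => ?_) (fun j => ?_) i
      · simp only [Fin.addCases_left]; exact hc₁ j
      · simp only [Fin.addCases_right]; exact hc₂ j
    · rw [Fin.sum_univ_add]
      simp only [Fin.addCases_left, Fin.addCases_right]
      rw [e, ← e₁, ← e₂]
  · intro c c' hc hc' hsum
    have hcl : ∀ i : Fin m, c (Fin.castAdd n i) ∈ g₁ i := fun i => by
      have := hc (Fin.castAdd n i); simpa only [Fin.addCases_left] using this
    have hcl' : ∀ i : Fin m, c' (Fin.castAdd n i) ∈ g₁ i := fun i => by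
      have := hc' (Fin.castAdd n i); simpa only [Fin.addCases_left] using this
    have hcr : ∀ i : Fin n, c (Fin.natAdd m i) ∈ g₂ i := fun i => by
      have := hc (Fin.natAdd m i); simpa only [Fin.addCases_right] using this
    have hcr' : ∀ i : Fin n, c' (Fin.natAdd m i) ∈ g₂ i := fun i => by
      have := hc' (Fin.natAdd m i); simpa only [Fin.addCases_right] using this
    rw [Fin.sum_univ_add, Fin.sum_univ_add] at hsum
    have s1 : ∑ i : Fin m, c (Fin.castAdd n i) ∈ L :=
      Submodule.sum_mem _ fun i _ => hle₁ i (hcl i)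
    have s1' : ∑ i : Fin m, c' (Fin.castAdd n i) ∈ L :=
      Submodule.sum_mem _ fun i _ => hle₁ i (hcl' i)
    have s2 : ∑ i : Fin n, c (Fin.natAdd m i) ∈ L' :=
      Submodule.sum_mem _ fun i _ => hle₂ i (hcr i)
    have s2' : ∑ i : Fin n, c' (Fin.natAdd m i) ∈ L' :=
      Submodule.sum_mem _ fun i _ => hle₂ i (hcr' i)
    obtain ⟨e1, e2⟩ := h.2.2.2 _ _ _ _ s1 s1' s2 s2' hsum
    have q1 := huniq₁ _ _ hcl hcl' e1
    have q2 := huniq₂ _ _ hcr hcr' e2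
    funext i
    refine Fin.addCases (fun j => ?_) (fun j => ?_) i
    · exact congrFun q1 j
    · exact congrFun q2 j

lemma isDirectSumOf_sup {N N' A B : Submodule S S} (h : IsDirectSumOf ⊤ N N')
    (h2 : IsDirectSumOf N' A B) : IsDirectSumOf ⊤ (N ⊔ A) B := by
  refine ⟨le_top, le_top, ?_, ?_⟩
  · intro x _
    obtain ⟨k, hk, l, hl, e⟩ := h.2.2.1 x trivial
    obtain ⟨a, ha, b, hb, e2⟩ := h2.2.2.1 l hl
    exact ⟨k + a, Submodule.mem_sup.mpr ⟨k, hk, a, ha, rfl⟩, b, hb, by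
      rw [e, e2, add_assoc]⟩
  · intro x x' b b' hx hx' hb hb' e
    obtain ⟨k, hk, a, ha, rfl⟩ := Submodule.mem_sup.mp hx
    obtain ⟨k', hk', a', ha', rfl⟩ := Submodule.mem_sup.mp hx'
    have hab : a + b ∈ N' := N'.add_mem (h2.1 ha) (h2.2.1 hb)
    have hab' : a' + b' ∈ N' := N'.add_mem (h2.1 ha') (h2.2.1 hb')
    obtain ⟨ek, eab⟩ := h.2.2.2 k k' (a + b) (a' + b') hk hk' hab hab'
      (by rw [← add_assoc, ← add_assoc]; exact e)
    obtain ⟨ea, eb⟩ := h2.2.2.2 a a' b b' ha ha' hb hb' eab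
    exact ⟨by rw [ek, ea], eb⟩

lemma lt_sup_of_directSum {N N' A : Submodule S S} (h : IsDirectSumOf ⊤ N N')
    (hA : A ≤ N') (hne : A ≠ ⊥) : N < N ⊔ A := by
  refine lt_of_le_of_ne le_sup_left fun heq => ?_
  obtain ⟨a, haA, ha0⟩ := (Submodule.ne_bot_iff A).mp hne
  have haN : a ∈ N := by rw [heq]; exact Submodule.mem_sup_right haA
  exact ha0 (eq_zero_of_mem_both h haN (hA haA))

lemma step_lemma {N N' : Submodule S S} (h : IsDirectSumOf ⊤ N N')
    (hbad : ¬ GoodSummand N') :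
    ∃ M M' : Submodule S S, IsDirectSumOf ⊤ M M' ∧ ¬ GoodSummand M' ∧ N < M := by
  have hNbot : N' ≠ ⊥ := fun hb => hbad (hb ▸ goodSummand_bot)
  have hsummand : IsDirectSummand N' := ⟨N, isDirectSumOf_swap h⟩
  have hnotirr : ¬ IsIrreducibleSummand N' := fun hi =>
    hbad (goodSummand_of_irreducible hi)
  have hex : ∃ L L' : Submodule S S, IsDirectSumOf N' L L' ∧ L ≠ ⊥ ∧ L ≠ N' := by
    by_contra hcon
    push_neg at hcon
    refine hnotirr ⟨hsummand, hNbot, fun L L' hds => ?_⟩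
    by_cases hLb : L = ⊥
    · exact Or.inl hLb
    · exact Or.inr (hcon L L' hds hLb)
  obtain ⟨L, L', h2, hLne, hLneN⟩ := hex
  have hL'ne : L' ≠ ⊥ := by
    intro hb
    refine hLneN (le_antisymm h2.1 fun x hx => ?_)
    obtain ⟨k, hk, l, hl, e⟩ := h2.2.2.1 x hx
    rw [hb, Submodule.mem_bot] at hl
    rw [e, hl, add_zero]
    exact hk
  by_cases hGL' : GoodSummand L'
  · have hGL : ¬ GoodSummand L := fun hGL =>
      hbad (goodSummand_of_directSum h2 hGL hGL')
    exact ⟨N ⊔ L', L, isDirectSumOf_sup h (isDirectSumOf_swap h2), hGL,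
      lt_sup_of_directSum h h2.2.1 hL'ne⟩
  · exact ⟨N ⊔ L, L', isDirectSumOf_sup h h2, hGL',
      lt_sup_of_directSum h h2.1 hLne⟩

lemma isDirectSumOf_bot_top : IsDirectSumOf (⊤ : Submodule S S) ⊥ ⊤ := by
  refine ⟨bot_le, le_rfl, fun m _ => ⟨0, Submodule.zero_mem _, m, trivial,
    (zero_add m).symm⟩, ?_⟩
  intro k k' l l' hk hk' _ _ e
  rw [Submodule.mem_bot] at hk hk'
  subst hk; subst hk'
  exact ⟨rfl, by simpa using e⟩

end Aux

/-- If `S`, as a left `S`-semimodule over itself, satisfies the ACC on direct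
summands, then `S = S₁ ⊕ ⋯ ⊕ Sₙ` is a finite direct sum of left ideals each of
which is an irreducible summand. -/
theorem decomposition_into_irreducible_summands_of_acc
    {S : Type*} [Semiring S]
    (hacc : ∀ f : ℕ → Submodule S S, (∀ n, IsDirectSummand (f n)) →
      (∀ n, f n ≤ f (n + 1)) → ∃ n, ∀ m, n ≤ m → f m = f n) :
    ∃ (n : ℕ) (Si : Fin n → Submodule S S),
      DirectSum.IsInternal Si ∧ ∀ i, IsIrreducibleSummand (Si i) := by
  by_cases hGood : GoodSummand (⊤ : Submodule S S)
  · obtain ⟨n, g, hirr, _, hspan, huniq⟩ := hGood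
    refine ⟨n, g, ⟨?_, ?_⟩, hirr⟩
    · -- injective
      intro x y hxy
      have key : ∀ z : DirectSum (Fin n) fun i => g i,
          DirectSum.coeAddMonoidHom g z = ∑ i, ((z i : S)) := by
        intro z
        conv_lhs => rw [← DirectSum.sum_univ_of z]
        rw [map_sum]
        simp [DirectSum.coeAddMonoidHom_of]
      have heq := huniq (fun i => (x i : S)) (fun i => (y i : S))
        (fun i => (x i).2) (fun i => (y i).2) (by rw [← key, ← key, hxy])
      exact DFinsupp.ext fun i => Subtype.ext (congrFun heq i)
    · -- surjective
      intro s
      obtain ⟨c, hc, e⟩ := hspan s trivial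
      refine ⟨∑ i, DirectSum.of (fun i => (g i : Type _)) i ⟨c i, hc i⟩, ?_⟩
      rw [map_sum]
      simp only [DirectSum.coeAddMonoidHom_of]
      exact e.symm
  · exfalso
    choose F F' hds hbad hlt using fun (p : {p : Submodule S S × Submodule S S //
      IsDirectSumOf ⊤ p.1 p.2 ∧ ¬ GoodSummand p.2}) =>
        step_lemma p.2.1 p.2.2
    let seq : ℕ → {p : Submodule S S × Submodule S S //
        IsDirectSumOf ⊤ p.1 p.2 ∧ ¬ GoodSummand p.2} := fun n =>
      Nat.rec ⟨(⊥, ⊤), isDirectSumOf_bot_top, hGood⟩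
        (fun _ t => ⟨(F t, F' t), hds t, hbad t⟩) n
    have hstrict : ∀ k, (seq k).1.1 < (seq (k + 1)).1.1 := fun k => hlt (seq k)
    obtain ⟨n, hn⟩ := hacc (fun k => (seq k).1.1)
      (fun k => ⟨(seq k).1.2, (seq k).2.1⟩) (fun k => (hstrict k).le)
    exact (hstrict n).ne (hn (n + 1) (Nat.le_succ n)).symm
end

section
/- Let S be a commutative semiring that is a direct sum S = S₁ ⊕ ⋯ ⊕ Sₖ of ideal-simple ideals. Then every subtractive ideal I of S equals ⨁_{a∈A} S_a for some subset A ⊆ {1,…,k}; in particular, every subtractive ideal of S is a direct summand of S. -/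
/-- Let `S` be a commutative semiring which is the internal direct sum
`S = S₁ ⊕ ⋯ ⊕ Sₖ` of ideal-simple ideals. Then every subtractive ideal `I` of `S`
equals `⨁_{a ∈ A} S_a` for some `A ⊆ {1,…,k}`; in particular every subtractive
ideal is a direct summand of `S`. -/
theorem subtractive_ideal_of_commutative_ideal_semisimple
    {S : Type*} [CommSemiring S] {k : ℕ} (Si : Fin k → Submodule S S)
    (hd : DirectSum.IsInternal Si)
    (hsimple : ∀ i, Si i ≠ ⊥ ∧ ∀ J : Submodule S S, J ≤ Si i → J = ⊥ ∨ J = Si i)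
    (I : Submodule S S) (hI : I.IsSubtractive) :
    (∃ A : Finset (Fin k), I = ⨆ a ∈ A, Si a) ∧ IsDirectSummand I := by
  classical
  -- basic facts from the internal direct sum decomposition
  have htop := hd.submodule_iSup_eq_top
  have hindep := hd.submodule_iSupIndep
  -- decompose 1 as a sum of elements of the `Si i`
  obtain ⟨f, hf, hfsum⟩ := (Submodule.mem_iSup_iff_exists_finsupp Si 1).mp
    (htop ▸ Submodule.mem_top)
  set e : Fin k → S := fun i => f i with he
  have he_mem : ∀ i, e i ∈ Si i := fun i => hf i
  have hsum1 : ∑ i, e i = 1 := by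
    rw [← hfsum, Finsupp.sum]
    exact (Finset.sum_subset (Finset.subset_univ _)
      (fun i _ hi => Finsupp.notMem_support_iff.mp hi)).symm
  -- ideals absorb multiplication
  have habs : ∀ (x : S) (p : Submodule S S), ∀ y ∈ p, x * y ∈ p := fun x p y hy => by
    simpa [smul_eq_mul] using p.smul_mem x hy
  -- every element decomposes along the `e i`
  have hdec : ∀ x : S, x = ∑ i, x * e i := fun x => by
    rw [← Finset.mul_sum, hsum1, mul_one]
  -- pairwise disjointness
  have hdisj : ∀ {i j : Fin k}, i ≠ j → ∀ x, x ∈ Si i → x ∈ Si j → x = 0 := by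
    intro i j hij x hxi hxj
    have hle : Si j ≤ ⨆ (l) (_ : l ≠ i), Si l :=
      le_iSup₂ (f := fun l (_ : l ≠ i) => Si l) j (Ne.symm hij)
    exact (Submodule.disjoint_def.mp (hindep i)) x hxi (hle hxj)
  -- e i acts as identity on Si i
  have hid : ∀ i, ∀ s ∈ Si i, s * e i = s := by
    intro i s hs
    have hz : ∀ j ∈ Finset.univ, j ≠ i → s * e j = 0 := by
      intro j _ hj
      have h1 : s * e j ∈ Si i := by
        rw [mul_comm]; exact habs _ _ _ hs
      have h2 : s * e j ∈ Si j := habs _ _ _ (he_mem j)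
      exact hdisj hj _ h2 h1
    exact (Finset.sum_eq_single i hz (fun h => absurd (Finset.mem_univ i) h)).symm.trans (hdec s).symm
  -- the dichotomy for each component
  have hdich : ∀ i, Si i ≤ I ∨ ∀ x ∈ I, x * e i = 0 := by
    intro i
    rcases (hsimple i).2 (I ⊓ Si i) inf_le_right with hbot | heq
    · right
      intro x hx
      have h1 : x * e i ∈ I := by rw [mul_comm]; exact habs _ _ _ hx
      have h2 : x * e i ∈ Si i := habs _ _ _ (he_mem i)
      have : x * e i ∈ I ⊓ Si i := ⟨h1, h2⟩
      rw [hbot] at this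
      simpa using this
    · left
      rw [← heq]; exact inf_le_left
  set A : Finset (Fin k) := Finset.univ.filter (fun i => Si i ≤ I) with hA
  have hAmem : ∀ i, i ∈ A ↔ Si i ≤ I := by
    intro i; simp [hA]
  have hnotA : ∀ i ∉ A, ∀ x ∈ I, x * e i = 0 := by
    intro i hi x hx
    rcases hdich i with h | h
    · exact absurd ((hAmem i).mpr h) hi
    · exact h x hx
  -- component membership: x * e i ∈ Si i always
  have hcomp : ∀ (x : S) (i : Fin k), x * e i ∈ Si i := fun x i => habs _ _ _ (he_mem i)
  -- Part 1 : I = ⨆ a ∈ A, Si a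
  have hIeq : I = ⨆ a ∈ A, Si a := by
    apply le_antisymm
    · intro x hx
      rw [hdec x]
      apply Submodule.sum_mem
      intro i _
      by_cases hiA : i ∈ A
      · exact (le_iSup₂ (f := fun a (_ : a ∈ A) => Si a) i hiA) (hcomp x i)
      · rw [hnotA i hiA x hx]; exact zero_mem _
    · exact iSup₂_le fun i hi => (hAmem i).mp hi
  refine ⟨⟨A, hIeq⟩, ?_⟩
  -- Part 2 : I is a direct summand, complement is the sum over Aᶜ
  set N' : Submodule S S := ⨆ a ∈ Aᶜ, Si a with hN'
  -- elements of N' are killed by e i for i ∈ A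
  have hN'kill : ∀ y ∈ N', ∀ i ∈ A, y * e i = 0 := by
    intro y hy i hi
    have h2 : y * e i ∈ Si i := hcomp y i
    have h1 : y * e i ∈ N' := by rw [mul_comm]; exact habs _ _ _ hy
    have hle : N' ≤ ⨆ (l) (_ : l ≠ i), Si l := by
      refine iSup₂_le fun j hj => ?_
      have hji : j ≠ i := by
        rintro rfl; exact (Finset.mem_compl.mp hj) hi
      exact le_iSup₂ (f := fun l (_ : l ≠ i) => Si l) j hji
    exact (Submodule.disjoint_def.mp (hindep i)) _ h2 (hle h1)
  have hIkill : ∀ x ∈ I, ∀ i ∉ A, x * e i = 0 := fun x hx i hi => hnotA i hi x hx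
  refine ⟨N', le_top, le_top, ?_, ?_⟩
  · -- existence of the decomposition
    intro m _
    refine ⟨∑ i ∈ A, m * e i, ?_, ∑ i ∈ Aᶜ, m * e i, ?_, ?_⟩
    · apply Submodule.sum_mem
      intro i hi
      exact ((hAmem i).mp hi) (hcomp m i)
    · apply Submodule.sum_mem
      intro i hi
      exact (le_iSup₂ (f := fun a (_ : a ∈ Aᶜ) => Si a) i hi) (hcomp m i)
    · rw [Finset.sum_add_sum_compl A fun i => m * e i]
      exact hdec m
  · -- uniqueness of the decomposition
    intro x x' y y' hx hx' hy hy' hsum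
    have hkey : ∀ i, x * e i = x' * e i ∧ y * e i = y' * e i := by
      intro i
      have h := congrArg (fun z => z * e i) hsum
      simp only [add_mul] at h
      by_cases hiA : i ∈ A
      · rw [hN'kill y hy i hiA, hN'kill y' hy' i hiA, add_zero, add_zero] at h
        exact ⟨h, by rw [hN'kill y hy i hiA, hN'kill y' hy' i hiA]⟩
      · rw [hIkill x hx i hiA, hIkill x' hx' i hiA, zero_add, zero_add] at h
        exact ⟨by rw [hIkill x hx i hiA, hIkill x' hx' i hiA], h⟩
    constructor
    · calc x = ∑ i, x * e i := hdec x
        _ = ∑ i, x' * e i := Finset.sum_congr rfl fun i _ => (hkey i).1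
        _ = x' := (hdec x').symm
    · calc y = ∑ i, y * e i := hdec y
        _ = ∑ i, y' * e i := Finset.sum_congr rfl fun i _ => (hkey i).2
        _ = y' := (hdec y').symm
end

section
/- In the semiring B(3,1) = {0,1,2} with a⊕b = a+b if a+b<3 and otherwise the unique c ∈ {1,2} with c ≡ a+b (mod 2), and analogous multiplication, the subset I = {0,2} is a subtractive ideal which is not a direct summand of B(3,1). -/
/-- The semiring `B(3,1)` on `{0,1,2}`: `a ⊕ b = a + b` if `a + b < 3`, else the
unique `c ∈ {1,2}` with `c ≡ a + b (mod 2)`; multiplication analogous. -/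
def B31 : Type := Fin 3

instance : Zero B31 := ⟨(0 : Fin 3)⟩
instance : One B31 := ⟨(1 : Fin 3)⟩
instance : Add B31 :=
  ⟨fun a b : Fin 3 =>
    if h : a.val + b.val < 3 then ⟨a.val + b.val, h⟩
    else if (a.val + b.val) % 2 = 1 then ⟨1, by omega⟩ else ⟨2, by omega⟩⟩
instance : Mul B31 :=
  ⟨fun a b : Fin 3 =>
    if h : a.val * b.val < 3 then ⟨a.val * b.val, h⟩
    else if (a.val * b.val) % 2 = 1 then ⟨1, by omega⟩ else ⟨2, by omega⟩⟩
instance : DecidableEq B31 := inferInstanceAs (DecidableEq (Fin 3))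
instance : Fintype B31 := inferInstanceAs (Fintype (Fin 3))

instance : CommSemiring B31 where
  add_assoc := by decide
  zero_add := by decide
  add_zero := by decide
  add_comm := by decide
  mul_assoc := by decide
  one_mul := by decide
  mul_one := by decide
  mul_comm := by decide
  zero_mul := by decide
  mul_zero := by decide
  left_distrib := by decide
  right_distrib := by decide
  nsmul := nsmulRec
/-- The ideal `I = {0, 2}` of `B(3,1)`. -/
def I31 : Submodule B31 B31 where
  carrier := {x | x = 0 ∨ x = (⟨2, by omega⟩ : Fin 3)}
  zero_mem' := Or.inl rfl
  add_mem' := by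
    have h : ∀ a b : B31, (a = 0 ∨ a = (⟨2, by omega⟩ : Fin 3)) →
        (b = 0 ∨ b = (⟨2, by omega⟩ : Fin 3)) →
        (a + b = 0 ∨ a + b = (⟨2, by omega⟩ : Fin 3)) := by 
      letI : ∀ (a : B31) (b : Fin 3), Decidable (@Eq B31 a b) := fun a b => instDecidableEqB31 a b
      decide
    intro a b ha hb; exact h a b ha hb
  smul_mem' := by
    have h : ∀ c x : B31, (x = 0 ∨ x = (⟨2, by omega⟩ : Fin 3)) →
        (c • x = 0 ∨ c • x = (⟨2, by omega⟩ : Fin 3)) := by 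
      letI : ∀ (a : B31) (b : Fin 3), Decidable (@Eq B31 a b) := fun a b => instDecidableEqB31 a b
      decide
    intro c x hx; exact h c x hx

/-- In `B(3,1)`, the subset `I = {0,2}` is a subtractive ideal which is not a
direct summand. -/
theorem B31_subtractive_ideal_not_summand :
    I31.IsSubtractive ∧ ¬ IsDirectSummand I31 := by
  have two : B31 := (⟨2, by omega⟩ : Fin 3)
  constructor
  · intro m n n' hn hn' h
    have key : ∀ m n n' : B31, (n = 0 ∨ n = (⟨2, by omega⟩ : Fin 3)) →
        (n' = 0 ∨ n' = (⟨2, by omega⟩ : Fin 3)) → m + n = n' →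
        (m = 0 ∨ m = (⟨2, by omega⟩ : Fin 3)) := by letI : ∀ (a : B31) (b : Fin 3), Decidable (@Eq B31 a b) := fun a b => instDecidableEqB31 a b; decide
    exact key m n n' hn hn' h
  · rintro ⟨N', -, -, hex, huniq⟩
    obtain ⟨k, hk, l, hl, h1⟩ := hex 1 trivial
    have h1N : (1 : B31) ∈ N' := by
      rcases hk with hk | hk
      · subst hk; rw [zero_add] at h1; rwa [← h1] at hl
      · subst hk
        have hl1 : l = 1 := by
          have : ∀ l : B31, (1 : B31) = (show B31 from ⟨2, by omega⟩) + l → l = 1 := by decide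
          exact this l h1
        rwa [← hl1]
    have h2N : ((⟨2, by omega⟩ : Fin 3) : B31) ∈ N' := by
      have := N'.add_mem h1N h1N
      have e : (1 : B31) + 1 = ((⟨2, by omega⟩ : Fin 3) : B31) := by letI : ∀ (a : B31) (b : Fin 3), Decidable (@Eq B31 a b) := fun a b => instDecidableEqB31 a b; decide
      rwa [e] at this
    have := huniq (⟨2, by omega⟩ : Fin 3) 0 0 (⟨2, by omega⟩ : Fin 3)
      (Or.inr rfl) (Or.inl rfl) N'.zero_mem h2N (by decide)
    exact absurd this.1 (fun h => absurd (congrArg Fin.val h) (by decide))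
end

section
/- In S = M₂(ℝ₊), the left ideal N₁ = {[[a,a],[b,b]] : a,b ∈ ℝ₊} is a subtractive left ideal that is not a direct summand: if S = N₁ + K for a left ideal K, then K = S and N₁ ∩ K ≠ 0, so the sum is not direct. -/
open scoped NNReal

/-- The left ideal `N₁ = {[[a,a],[b,b]] : a, b ∈ ℝ₊}` of `M₂(ℝ₊)`. -/
def N1 : Submodule (Matrix (Fin 2) (Fin 2) ℝ≥0) (Matrix (Fin 2) (Fin 2) ℝ≥0) where
  carrier := {A | A 0 0 = A 0 1 ∧ A 1 0 = A 1 1}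
  zero_mem' := ⟨rfl, rfl⟩
  add_mem' := by
    rintro A B ⟨h1, h2⟩ ⟨h3, h4⟩
    exact ⟨by simp [Matrix.add_apply, h1, h3], by simp [Matrix.add_apply, h2, h4]⟩
  smul_mem' := by
    rintro c A ⟨h1, h2⟩
    have hcol : ∀ k : Fin 2, A k 0 = A k 1 := by
      intro k; fin_cases k <;> assumption
    constructor <;> simp only [smul_eq_mul, Matrix.mul_apply, hcol]


lemma mem_N1 {A : Matrix (Fin 2) (Fin 2) ℝ≥0} : A ∈ N1 ↔ A 0 0 = A 0 1 ∧ A 1 0 = A 1 1 :=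
  Iff.rfl

/-- If `1 = k + l` with `k ∈ N1`, then `k = 0` and `l = 1`. -/
lemma one_decomp {k l : Matrix (Fin 2) (Fin 2) ℝ≥0} (hk : k ∈ N1)
    (h : (1 : Matrix (Fin 2) (Fin 2) ℝ≥0) = k + l) : k = 0 ∧ l = 1 := by
  obtain ⟨h1, h2⟩ := hk
  have e : ∀ i j, k i j + l i j = (1 : Matrix (Fin 2) (Fin 2) ℝ≥0) i j := fun i j => by
    rw [h]; rfl
  have e01 := e 0 1
  have e10 := e 1 0
  rw [Matrix.one_apply_ne (by decide)] at e01 e10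
  rw [add_eq_zero] at e01 e10
  have hk0 : k = 0 := by
    ext i j
    fin_cases i <;> fin_cases j <;>
      simp [h1, ← h2, e01.1, e10.1]
  refine ⟨hk0, ?_⟩
  ext i j
  have := e i j
  rw [hk0] at this
  simpa using this

/-- In `S = M₂(ℝ₊)`, the left ideal `N₁` is subtractive but not a direct summand:
any left ideal `K` with `S = N₁ + K` satisfies `K = S` and `N₁ ∩ K ≠ 0`. -/
theorem N1_subtractive_not_summand :
    N1.IsSubtractive ∧
      (∀ K : Submodule (Matrix (Fin 2) (Fin 2) ℝ≥0) (Matrix (Fin 2) (Fin 2) ℝ≥0),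
        N1 ⊔ K = ⊤ → K = ⊤ ∧ N1 ⊓ K ≠ ⊥) ∧
      ¬ IsDirectSummand N1 := by
  have hJ : (Matrix.of ![![1, 1], ![1, 1]] : Matrix (Fin 2) (Fin 2) ℝ≥0) ∈ N1 := ⟨rfl, rfl⟩
  have hJne : (Matrix.of ![![1, 1], ![1, 1]] : Matrix (Fin 2) (Fin 2) ℝ≥0) ≠ 0 := by
    intro h
    have := congrFun (congrFun h 0) 0
    simp at this
  refine ⟨?_, ?_, ?_⟩
  · intro m n n' hn hn' h
    have e : ∀ i j, m i j + n i j = n' i j := fun i j => by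
      rw [← h]; rfl
    constructor
    · have := (e 0 0).trans hn'.1
      rw [← e 0 1, hn.1] at this
      exact add_right_cancel this
    · have := (e 1 0).trans hn'.2
      rw [← e 1 1, hn.2] at this
      exact add_right_cancel this
  · intro K hK
    have h1 : (1 : Matrix (Fin 2) (Fin 2) ℝ≥0) ∈ N1 ⊔ K := hK ▸ Submodule.mem_top
    rw [Submodule.mem_sup] at h1
    obtain ⟨k, hk, l, hl, hkl⟩ := h1
    obtain ⟨-, hl1⟩ := one_decomp hk hkl.symm
    subst hl1
    have hKtop : K = ⊤ := by
      rw [Submodule.eq_top_iff']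
      intro x
      simpa using K.smul_mem x hl
    refine ⟨hKtop, ?_⟩
    rw [Submodule.ne_bot_iff]
    exact ⟨_, ⟨hJ, hKtop ▸ Submodule.mem_top⟩, hJne⟩
  · rintro ⟨N', -, -, hsum, huniq⟩
    obtain ⟨k, hk, l, hl, hkl⟩ := hsum 1 Submodule.mem_top
    obtain ⟨-, hl1⟩ := one_decomp hk hkl
    subst hl1
    have hJN' : (Matrix.of ![![1, 1], ![1, 1]] : Matrix (Fin 2) (Fin 2) ℝ≥0) ∈ N' := by
      simpa using N'.smul_mem (Matrix.of ![![1, 1], ![1, 1]]) hl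
    have := (huniq _ 0 0 _ hJ N1.zero_mem N'.zero_mem hJN' (by rw [add_zero, zero_add])).1
    exact hJne this
end

section
/- A left S-semimodule N is a direct summand of a left S-semimodule M if and only if N = α(M) for some endomorphism α of M that is complemented in End(M), i.e., there exists an endomorphism α̃ with α + α̃ = id_M and α∘α̃ = 0 = α̃∘α. -/
/-- `N` is a direct summand of `M` if and only if `N` is the image of an
endomorphism `α` of `M` that is complemented in `End(M)`: there is `α̃` with
`α + α̃ = id` and `α ∘ α̃ = 0 = α̃ ∘ α`. -/
theorem isDirectSummand_iff_range_of_complemented_endomorphism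
    {S : Type*} [Semiring S] {M : Type*} [AddCommMonoid M] [Module S M]
    (N : Submodule S M) :
    IsDirectSummand N ↔
      ∃ α : M →ₗ[S] M,
        (∃ αt : M →ₗ[S] M, α + αt = LinearMap.id ∧
          α.comp αt = 0 ∧ αt.comp α = 0) ∧
        LinearMap.range α = N := by
  constructor
  · rintro ⟨N', _, _, hex, huniq⟩
    have hdec : ∀ m : M, ∃ k ∈ N, ∃ l ∈ N', m = k + l := fun m => hex m trivial
    choose f hf g hg hfg using hdec
    have key : ∀ m k l, k ∈ N → l ∈ N' → m = k + l → f m = k ∧ g m = l := by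
      intro m k l hk hl h
      exact huniq (f m) k (g m) l (hf m) hk (hg m) hl (by rw [← hfg m, ← h])
    have fadd : ∀ a b : M, f (a + b) = f a + f b ∧ g (a + b) = g a + g b := by
      intro a b
      refine key _ _ _ (N.add_mem (hf a) (hf b)) (N'.add_mem (hg a) (hg b)) ?_
      conv_lhs => rw [hfg a, hfg b]
      abel
    have fsmul : ∀ (s : S) (a : M), f (s • a) = s • f a ∧ g (s • a) = s • g a := by
      intro s a
      refine key _ _ _ (N.smul_mem s (hf a)) (N'.smul_mem s (hg a)) ?_
      conv_lhs => rw [hfg a]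
      rw [smul_add]
    refine ⟨⟨⟨f, fun a b => (fadd a b).1⟩, fun s a => (fsmul s a).1⟩,
      ⟨⟨⟨g, fun a b => (fadd a b).2⟩, fun s a => (fsmul s a).2⟩, ?_, ?_, ?_⟩, ?_⟩
    · ext m; exact (hfg m).symm
    · ext m
      exact (key (g m) 0 (g m) N.zero_mem (hg m) (zero_add _).symm).1
    · ext m
      exact (key (f m) (f m) 0 (hf m) N'.zero_mem (add_zero _).symm).2
    · ext n
      constructor
      · rintro ⟨m, rfl⟩; exact hf m
      · intro hn
        exact ⟨n, (key n n 0 hn N'.zero_mem (add_zero _).symm).1⟩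
  · rintro ⟨α, ⟨αt, hsum, h1, h2⟩, rfl⟩
    have hα : ∀ m, α m + αt m = m := fun m => congrArg (· m) hsum
    have hαt0 : ∀ m, α (αt m) = 0 := fun m => congrArg (· m) h1
    have hα0 : ∀ m, αt (α m) = 0 := fun m => congrArg (· m) h2
    have hfixα : ∀ m ∈ LinearMap.range α, α m = m ∧ αt m = 0 := by
      rintro _ ⟨a, rfl⟩
      refine ⟨?_, hα0 a⟩
      have h := congrArg α (hα a)
      rw [map_add, hαt0, add_zero] at h
      exact h
    have hfixαt : ∀ m ∈ LinearMap.range αt, αt m = m ∧ α m = 0 := by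
      rintro _ ⟨a, rfl⟩
      refine ⟨?_, hαt0 a⟩
      have h := congrArg αt (hα a)
      rw [map_add, hα0, zero_add] at h
      exact h
    refine ⟨LinearMap.range αt, le_top, le_top, fun m _ => ⟨α m, ⟨m, rfl⟩, αt m, ⟨m, rfl⟩, (hα m).symm⟩, ?_⟩
    intro k k' l l' hk hk' hl hl' heq
    have e1 : α (k + l) = α (k' + l') := by rw [heq]
    have e2 : αt (k + l) = αt (k' + l') := by rw [heq]
    rw [map_add, map_add, (hfixα k hk).1, (hfixα k' hk').1,
      (hfixαt l hl).2, (hfixαt l' hl').2, add_zero, add_zero] at e1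
    rw [map_add, map_add, (hfixα k hk).2, (hfixα k' hk').2,
      (hfixαt l hl).1, (hfixαt l' hl').1, zero_add, zero_add] at e2
    exact ⟨e1, e2⟩
end
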